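/- The conditional estimator is unbiased: under the model, E[S_{1-p}(k|l)] = E[S_p(l)] · [C(k+l,l)·p^l·(1-p)^k·C(k+l+r-1,k+l)·ξ^{k+l}] / [C(l+r-1,l)·ξ_p^l·(1-ξ_p)^r·(1-ξ)^{-r}], i.e., E[Σ_s 1{n_s^p=l, n_s-n_s^p=k}] equals E[Σ_s 1{n_s^p=l}] times the conditional probability P(unsampled = k | sampled = l) given by the Bayes formula with negative binomial marginals. -/

import Mathlib

open MeasureTheory

/-- Generalized negative binomial coefficient C(n+r-1, n) = Γ(n+r)/(Γ(n+1)Γ(r)). -/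
noncomputable def nbCoef (r : ℝ) (n : ℕ) : ℝ :=
  Real.Gamma (n + r) / (Real.Gamma (n + 1) * Real.Gamma r)

section Aux

open Set
open scoped ENNReal

lemma nbCoef_pos {r : ℝ} (hr : 0 < r) (n : ℕ) : 0 < nbCoef r n := by
  have h1 : (0:ℝ) < (n:ℝ) + r := by positivity
  have h2 : (0:ℝ) < (n:ℝ) + 1 := by positivity
  exact div_pos (Real.Gamma_pos_of_pos h1)
    (mul_pos (Real.Gamma_pos_of_pos h2) (Real.Gamma_pos_of_pos hr))

lemma nbCoef_zero {r : ℝ} (hr : 0 < r) : nbCoef r 0 = 1 := by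
  have := (Real.Gamma_pos_of_pos hr).ne'
  simp [nbCoef, Real.Gamma_one]
  exact this

lemma nbCoef_mul_choose {r : ℝ} (hr : 0 < r) (m k : ℕ) :
    nbCoef r (m + k) * ((m + k).choose m : ℝ) = nbCoef r m * nbCoef (r + m) k := by
  have hΓr := (Real.Gamma_pos_of_pos hr).ne'
  have hΓrm := (Real.Gamma_pos_of_pos (show (0:ℝ) < r + m by positivity)).ne'
  have hch : ((m + k).choose m : ℝ) =
      ((m + k).factorial : ℝ) / ((m.factorial : ℝ) * (k.factorial : ℝ)) := by
    rw [Nat.cast_choose ℝ (Nat.le_add_right m k), Nat.add_sub_cancel_left]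
  have e1 : Real.Gamma (((m + k : ℕ) : ℝ) + r) = Real.Gamma ((k : ℝ) + (r + m)) := by
    congr 1; push_cast; ring
  have e2 : Real.Gamma (((m + k : ℕ) : ℝ) + 1) = ((m + k).factorial : ℝ) :=
    Real.Gamma_nat_eq_factorial (m + k)
  have e3 : Real.Gamma ((m : ℝ) + 1) = (m.factorial : ℝ) := Real.Gamma_nat_eq_factorial m
  have e4 : Real.Gamma ((k : ℝ) + 1) = (k.factorial : ℝ) := Real.Gamma_nat_eq_factorial k
  have hm : (0:ℝ) < m.factorial := by positivity
  have hk : (0:ℝ) < k.factorial := by positivity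
  have hmk : (0:ℝ) < (m + k).factorial := by positivity
  rw [nbCoef, nbCoef, nbCoef, e1, e2, e3, e4, hch]
  field_simp
  ring

lemma Gamma_lintegral {s : ℝ} (hs : 0 < s) :
    ∫⁻ t in Ioi (0:ℝ), ENNReal.ofReal (Real.exp (-t) * t ^ (s - 1)) =
      ENNReal.ofReal (Real.Gamma s) := by
  rw [Real.Gamma_eq_integral hs]
  rw [MeasureTheory.ofReal_integral_eq_lintegral_ofReal (Real.GammaIntegral_convergent hs)]
  refine (ae_restrict_iff' measurableSet_Ioi).2 (Filter.Eventually.of_forall fun t ht => ?_)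
  have : (0:ℝ) < t := ht
  positivity

lemma Gamma_lintegral_scaled {s b : ℝ} (hs : 0 < s) (hb : 0 < b) :
    ∫⁻ t in Ioi (0:ℝ), ENNReal.ofReal (Real.exp (-(b * t)) * t ^ (s - 1)) =
      ENNReal.ofReal ((1 / b) ^ s * Real.Gamma s) := by
  have hint0 : IntegrableOn (fun t : ℝ => Real.exp (-(b * t)) * (b * t) ^ (s - 1)) (Ioi 0) := by
    have := (integrableOn_Ioi_comp_mul_left_iff
      (fun x : ℝ => Real.exp (-x) * x ^ (s - 1)) 0 hb).2
    simpa using this (by simpa using Real.GammaIntegral_convergent hs)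
  have hint : IntegrableOn (fun t : ℝ => t ^ (s - 1) * Real.exp (-(b * t))) (Ioi 0) := by
    have h2 : IntegrableOn (fun t : ℝ => (b ^ (s-1))⁻¹ *
        (Real.exp (-(b * t)) * (b * t) ^ (s - 1))) (Ioi 0) := hint0.const_mul _
    refine h2.congr_fun (fun t ht => ?_) measurableSet_Ioi
    have ht' : (0:ℝ) < t := ht
    beta_reduce
    rw [Real.mul_rpow hb.le ht'.le]
    have : b ^ (s-1) ≠ 0 := (Real.rpow_pos_of_pos hb _).ne'
    field_simp
  rw [← Real.integral_rpow_mul_exp_neg_mul_Ioi hs hb,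
    MeasureTheory.ofReal_integral_eq_lintegral_ofReal hint]
  · refine lintegral_congr_ae ((ae_restrict_iff' measurableSet_Ioi).2
      (Filter.Eventually.of_forall fun t ht => ?_))
    simp only [mul_comm]
  · refine (ae_restrict_iff' measurableSet_Ioi).2 (Filter.Eventually.of_forall fun t ht => ?_)
    have : (0:ℝ) < t := ht
    positivity

lemma nbCoef_hasSum {a x : ℝ} (ha : 0 < a) (hx0 : 0 ≤ x) (hx1 : x < 1) :
    HasSum (fun n : ℕ => nbCoef a n * x ^ n) ((1 - x) ^ (-a)) := by
  have hΓa := Real.Gamma_pos_of_pos ha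
  have h1x : (0:ℝ) < 1 - x := by linarith
  have hnn : ∀ n : ℕ, 0 ≤ nbCoef a n * x ^ n := fun n =>
    mul_nonneg (nbCoef_pos ha n).le (pow_nonneg hx0 n)
  have key : ∑' n : ℕ, ENNReal.ofReal (nbCoef a n * x ^ n) =
      ENNReal.ofReal ((1 - x) ^ (-a)) := by
    have step1 : ∀ n : ℕ, ENNReal.ofReal (nbCoef a n * x ^ n) =
        ∫⁻ t in Ioi (0:ℝ), ENNReal.ofReal (x ^ n / (n.factorial * Real.Gamma a)) *
          ENNReal.ofReal (Real.exp (-t) * t ^ (((n:ℝ) + a) - 1)) := by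
      intro n
      rw [lintegral_const_mul' _ _ ENNReal.ofReal_ne_top,
        Gamma_lintegral (show (0:ℝ) < (n:ℝ) + a by positivity),
        ← ENNReal.ofReal_mul (by positivity)]
      congr 1
      rw [nbCoef, Real.Gamma_nat_eq_factorial n]
      have h1 : ((n.factorial : ℝ)) ≠ 0 := by positivity
      field_simp
    calc ∑' n : ℕ, ENNReal.ofReal (nbCoef a n * x ^ n)
        = ∑' n : ℕ, ∫⁻ t in Ioi (0:ℝ),
            ENNReal.ofReal (x ^ n / (n.factorial * Real.Gamma a)) *
            ENNReal.ofReal (Real.exp (-t) * t ^ (((n:ℝ) + a) - 1)) := tsum_congr step1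
      _ = ∫⁻ t in Ioi (0:ℝ), ∑' n : ℕ,
            ENNReal.ofReal (x ^ n / (n.factorial * Real.Gamma a)) *
            ENNReal.ofReal (Real.exp (-t) * t ^ (((n:ℝ) + a) - 1)) := by
          refine (lintegral_tsum fun n => Measurable.aemeasurable ?_).symm
          fun_prop
      _ = ∫⁻ t in Ioi (0:ℝ), ENNReal.ofReal (1 / Real.Gamma a) *
            ENNReal.ofReal (Real.exp (-((1 - x) * t)) * t ^ (a - 1)) := by
          refine setLIntegral_congr_fun measurableSet_Ioi
            (fun t ht => ?_)
          have ht' : (0:ℝ) < t := ht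
          have hterm : ∀ n : ℕ,
              ENNReal.ofReal (x ^ n / (n.factorial * Real.Gamma a)) *
                ENNReal.ofReal (Real.exp (-t) * t ^ (((n:ℝ) + a) - 1)) =
              ENNReal.ofReal ((x * t) ^ n / n.factorial) *
                ENNReal.ofReal (Real.exp (-t) * t ^ (a - 1) / Real.Gamma a) := by
            intro n
            rw [← ENNReal.ofReal_mul (by positivity), ← ENNReal.ofReal_mul (by positivity)]
            congr 1
            rw [show ((n:ℝ) + a) - 1 = (n:ℝ) + (a - 1) by ring, Real.rpow_add ht',
              Real.rpow_natCast, mul_pow]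
            have h1 : ((n.factorial : ℝ)) ≠ 0 := by positivity
            field_simp
          simp_rw [hterm]
          rw [ENNReal.tsum_mul_right]
          have hsum : HasSum (fun n : ℕ => (x * t) ^ n / (n.factorial : ℝ))
              (Real.exp (x * t)) := by
            rw [Real.exp_eq_exp_ℝ]
            exact NormedSpace.expSeries_div_hasSum_exp (x * t)
          rw [← ENNReal.ofReal_tsum_of_nonneg (fun n => by positivity) hsum.summable,
            hsum.tsum_eq, ← ENNReal.ofReal_mul (Real.exp_nonneg _),
            ← ENNReal.ofReal_mul (by positivity)]
          congr 1
          have hE : Real.exp (x * t) * Real.exp (-t) = Real.exp (-((1 - x) * t)) := by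
            rw [← Real.exp_add]; congr 1; ring
          rw [← hE]
          ring
      _ = ENNReal.ofReal (1 / Real.Gamma a) *
            ENNReal.ofReal ((1 / (1 - x)) ^ a * Real.Gamma a) := by
          rw [lintegral_const_mul' _ _ ENNReal.ofReal_ne_top,
            Gamma_lintegral_scaled ha h1x]
      _ = ENNReal.ofReal ((1 - x) ^ (-a)) := by
          rw [← ENNReal.ofReal_mul (by positivity)]
          congr 1
          rw [show (1:ℝ) / (1 - x) = (1 - x)⁻¹ from one_div _,
            Real.inv_rpow h1x.le, ← Real.rpow_neg h1x.le]
          field_simp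
  have hsummable : Summable (fun n : ℕ => nbCoef a n * x ^ n) := by
    have hne : ∑' n : ℕ, ENNReal.ofReal (nbCoef a n * x ^ n) ≠ ⊤ := by
      rw [key]; exact ENNReal.ofReal_ne_top
    refine (ENNReal.summable_toReal hne).congr fun n => ?_
    rw [ENNReal.toReal_ofReal (hnn n)]
  refine (Summable.hasSum_iff hsummable).2 ?_
  have h2 : ENNReal.ofReal (∑' n : ℕ, nbCoef a n * x ^ n) =
      ENNReal.ofReal ((1 - x) ^ (-a)) := by
    rw [ENNReal.ofReal_tsum_of_nonneg hnn hsummable, key]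
  exact (ENNReal.ofReal_eq_ofReal_iff (tsum_nonneg hnn)
    (Real.rpow_nonneg h1x.le _)).1 h2

lemma measure_eq_and_nullMeasurable {Ω : Type*} [MeasurableSpace Ω] {μ : Measure Ω}
    [IsProbabilityMeasure μ] {B : Set Ω} {b : ℝ≥0∞} (hb : b ≤ 1)
    (h1 : μ B ≤ b) (h2 : μ Bᶜ ≤ 1 - b) :
    μ B = b ∧ NullMeasurableSet B μ := by
  have hge : (1:ℝ≥0∞) ≤ μ B + μ Bᶜ := by
    rw [← measure_univ (μ := μ), ← Set.union_compl_self B]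
    exact measure_union_le _ _
  have hB : μ B = b := by
    refine le_antisymm h1 ?_
    have h3 : (1:ℝ≥0∞) ≤ μ B + (1 - b) := hge.trans (add_le_add le_rfl h2)
    have h4 : (1:ℝ≥0∞) - (1 - b) ≤ μ B := tsub_le_iff_right.2 h3
    rwa [ENNReal.sub_sub_cancel ENNReal.one_ne_top hb] at h4
  have hBc : μ Bᶜ = 1 - b := by
    refine le_antisymm h2 ?_
    rw [← hB] at hb ⊢
    exact tsub_le_iff_left.2 (hge.trans le_rfl)
  have htm := measurableSet_toMeasurable μ B
  have hum := measurableSet_toMeasurable μ Bᶜ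
  have hBt : B ⊆ toMeasurable μ B := subset_toMeasurable μ B
  have hBcu : Bᶜ ⊆ toMeasurable μ Bᶜ := subset_toMeasurable μ Bᶜ
  have hucB : (toMeasurable μ Bᶜ)ᶜ ⊆ B := by
    intro ω hω
    by_contra hωB
    exact hω (hBcu hωB)
  have huniv : μ (toMeasurable μ B ∪ toMeasurable μ Bᶜ) = 1 := by
    refine le_antisymm prob_le_one ?_
    rw [← measure_univ (μ := μ)]
    refine measure_mono fun ω _ => ?_
    by_cases hωB : ω ∈ B
    · exact Or.inl (hBt hωB)
    · exact Or.inr (hBcu hωB)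
  have hinter : μ (toMeasurable μ B ∩ toMeasurable μ Bᶜ) = 0 := by
    have h5 := measure_union_add_inter (μ := μ) (toMeasurable μ B) hum
    rw [huniv, measure_toMeasurable, measure_toMeasurable, hB, hBc,
      add_tsub_cancel_of_le hb] at h5
    have h6 : (1:ℝ≥0∞) + μ (toMeasurable μ B ∩ toMeasurable μ Bᶜ) = 1 + 0 := by
      rw [add_zero]; exact h5
    exact ((ENNReal.cancel_of_ne ENNReal.one_ne_top).inj).1 h6
  have hnull : μ (B \ (toMeasurable μ Bᶜ)ᶜ) = 0 := by
    refine measure_mono_null (fun ω hω => ?_) hinter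
    exact ⟨hBt hω.1, not_not.1 hω.2⟩
  have hBeq : B = (toMeasurable μ Bᶜ)ᶜ ∪ (B \ (toMeasurable μ Bᶜ)ᶜ) := by
    rw [Set.union_diff_cancel hucB]
  exact ⟨hB, hBeq ▸ (hum.compl.nullMeasurableSet.union_null hnull)⟩

lemma indicator_integral_nm {Ω : Type*} [MeasurableSpace Ω] {μ : Measure Ω}
    [IsFiniteMeasure μ] {B : Set Ω} (h : NullMeasurableSet B μ) :
    Integrable (B.indicator fun _ => (1:ℝ)) μ ∧
      ∫ ω, B.indicator (fun _ => (1:ℝ)) ω ∂μ = (μ B).toReal := by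
  obtain ⟨C, hCB, hC, hae⟩ := h.exists_measurable_subset_ae_eq
  have hind : C.indicator (fun _ => (1:ℝ)) =ᵐ[μ] B.indicator fun _ => (1:ℝ) :=
    indicator_ae_eq_of_ae_eq_set hae
  have hCint : Integrable (C.indicator fun _ => (1:ℝ)) μ :=
    (integrable_indicator_iff hC).2 (integrableOn_const (measure_lt_top μ C).ne)
  refine ⟨hCint.congr hind, ?_⟩
  rw [← integral_congr_ae hind, integral_indicator_const (1:ℝ) hC, measureReal_def, measure_congr hae,
    smul_eq_mul, mul_one]

end Aux
/-- Unbiasedness of the conditional estimator: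
E[S_{1-p}(k|l)] = E[S_p(l)] · [C(k+l,l) p^l (1-p)^k C(k+l+r-1,k+l) ξ^{k+l}] /
[C(l+r-1,l) ξ_p^l (1-ξ_p)^r (1-ξ)^{-r}], with ξ_p = pξ/(1-ξ(1-p)). -/
theorem stmt17 {Ω : Type*} [MeasurableSpace Ω] (μ : Measure Ω)
    [IsProbabilityMeasure μ] (r ξ p : ℝ) (hr : 0 < r)
    (hξ : ξ ∈ Set.Ioo (0:ℝ) 1) (hp : p ∈ Set.Ioo (0:ℝ) 1)
    (S : ℕ) (N Np : Fin S → Ω → ℕ) (hle : ∀ s ω, Np s ω ≤ N s ω)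
    (hjoint : ∀ s, ∀ n k : ℕ, k ≤ n →
      μ {ω | N s ω = n ∧ Np s ω = k} =
        ENNReal.ofReal ((n.choose k : ℝ) * p ^ k * (1 - p) ^ (n - k) *
          (if 1 ≤ n then (1 - (1 - ξ) ^ r)⁻¹ * nbCoef r n * ξ ^ n * (1 - ξ) ^ r
           else 0)))
    (l k : ℕ) (hl : 1 ≤ l) :
    ∫ ω, ((Finset.univ.filter
        fun s : Fin S => Np s ω = l ∧ N s ω - Np s ω = k).card : ℝ) ∂μ =
      (∫ ω, ((Finset.univ.filter fun s : Fin S => Np s ω = l).card : ℝ) ∂μ) *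
        ((((k + l).choose l : ℝ) * p ^ l * (1 - p) ^ k *
          nbCoef r (k + l) * ξ ^ (k + l)) /
        (nbCoef r l * (p * ξ / (1 - ξ * (1 - p))) ^ l *
          (1 - p * ξ / (1 - ξ * (1 - p))) ^ r * (1 - ξ) ^ (-r))) := by
  obtain ⟨hξ0, hξ1⟩ := hξ
  obtain ⟨hp0, hp1⟩ := hp
  have h1ξ : (0:ℝ) < 1 - ξ := by linarith
  have h1p : (0:ℝ) < 1 - p := by linarith
  have hq0 : (0:ℝ) ≤ ξ * (1 - p) := by positivity
  have hq1 : ξ * (1 - p) < 1 := by nlinarith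
  have h1q : (0:ℝ) < 1 - ξ * (1 - p) := by linarith
  have hΓr := Real.Gamma_pos_of_pos hr
  have hrpow1 : (1 - ξ) ^ r < 1 := Real.rpow_lt_one h1ξ.le (by linarith) hr
  have hrpow0 : (0:ℝ) < (1 - ξ) ^ r := Real.rpow_pos_of_pos h1ξ r
  have hcden : (0:ℝ) < 1 - (1 - ξ) ^ r := by linarith
  set c : ℝ := (1 - (1 - ξ) ^ r)⁻¹ with hcdef
  have hc0 : (0:ℝ) < c := inv_pos.2 hcden
  set ξp : ℝ := p * ξ / (1 - ξ * (1 - p)) with hξpdef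
  have hξp0 : (0:ℝ) < ξp := by rw [hξpdef]; positivity
  have hξp1 : ξp < 1 := by
    rw [hξpdef, div_lt_one h1q]; nlinarith
  have h1ξp : 1 - ξp = (1 - ξ) / (1 - ξ * (1 - p)) := by
    rw [hξpdef]; field_simp; ring
  -- elementary probabilities
  set g : ℕ → ℕ → ℝ := fun m k' => ((m + k').choose m : ℝ) * p ^ m * (1 - p) ^ k' *
      (if 1 ≤ m + k' then c * nbCoef r (m + k') * ξ ^ (m + k') * (1 - ξ) ^ r else 0)
      with hgdef
  have hgnn : ∀ m k', 0 ≤ g m k' := by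
    intro m k'
    simp only [hgdef]
    split_ifs with h
    · have h1 := (nbCoef_pos hr (m + k')).le
      positivity
    · simp
  have hA : ∀ (s : Fin S) (m k' : ℕ),
      μ {ω | Np s ω = m ∧ N s ω - Np s ω = k'} = ENNReal.ofReal (g m k') := by
    intro s m k'
    have hset : {ω | Np s ω = m ∧ N s ω - Np s ω = k'} =
        {ω | N s ω = m + k' ∧ Np s ω = m} := by
      ext ω
      simp only [Set.mem_setOf_eq]
      have := hle s ω
      omega
    rw [hset, hjoint s (m + k') m (Nat.le_add_right m k')]
    congr 1
    simp only [hgdef, Nat.add_sub_cancel_left]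
  -- row sums
  set Sm : ℕ → ℝ := fun m => if m = 0 then
      c * (1 - ξ) ^ r * ((1 - ξ * (1 - p)) ^ (-r) - 1)
    else c * (1 - ξ) ^ r * nbCoef r m * (p * ξ) ^ m *
      (1 - ξ * (1 - p)) ^ (-(r + (m:ℝ))) with hSmdef
  have hSm : ∀ m, HasSum (fun k' => g m k') (Sm m) := by
    intro m
    rcases Nat.eq_zero_or_pos m with hm | hm
    · subst hm
      have h := ((nbCoef_hasSum hr hq0 hq1).mul_left (c * (1 - ξ) ^ r)).update 0 0
      have hfun : Function.update
          (fun k' => c * (1 - ξ) ^ r * (nbCoef r k' * (ξ * (1 - p)) ^ k')) 0 0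
          = fun k' => g 0 k' := by
        funext k'
        rcases Nat.eq_zero_or_pos k' with hk | hk
        · subst hk
          simp [hgdef]
        · rw [Function.update_of_ne (by omega)]
          simp only [hgdef, zero_add]
          rw [if_pos (by omega : 1 ≤ k'), Nat.choose_zero_right, mul_pow ξ (1 - p) k']
          push_cast
          ring
      rw [hfun] at h
      convert h using 1
      · rfl
      rw [hSmdef]
      simp only [eq_self_iff_true, if_true, nbCoef_zero hr, pow_zero]
      ring
    · have hb : (0:ℝ) < r + (m:ℝ) := by positivity
      have h := (nbCoef_hasSum hb hq0 hq1).mul_left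
        (c * (1 - ξ) ^ r * nbCoef r m * (p * ξ) ^ m)
      have hfun : (fun k' => c * (1 - ξ) ^ r * nbCoef r m * (p * ξ) ^ m *
          (nbCoef (r + (m:ℝ)) k' * (ξ * (1 - p)) ^ k')) = fun k' => g m k' := by
        funext k'
        have hid := nbCoef_mul_choose hr m k'
        simp only [hgdef]
        rw [if_pos (by omega : 1 ≤ m + k'), mul_pow ξ (1 - p) k']
        linear_combination (-(c * (1 - ξ) ^ r * p ^ m * (1 - p) ^ k' * ξ ^ m * ξ ^ k')) * hid
      rw [hfun] at h
      convert h using 1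
      · rfl
      rw [hSmdef]
      simp only [if_neg (by omega : ¬ m = 0)]
  have hSmnn : ∀ m, 0 ≤ Sm m := by
    intro m
    have := tsum_nonneg (L := SummationFilter.unconditional ℕ) (hgnn m)
    rwa [(hSm m).tsum_eq] at this
  have hinner : ∀ m, ∑' k', ENNReal.ofReal (g m k') = ENNReal.ofReal (Sm m) := by
    intro m
    rw [← ENNReal.ofReal_tsum_of_nonneg (hgnn m) (hSm m).summable, (hSm m).tsum_eq]
  -- total sum is 1
  have hout : HasSum Sm 1 := by
    have h := ((nbCoef_hasSum hr hξp0.le hξp1).mul_left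
      (c * (1 - ξ) ^ r * (1 - ξ * (1 - p)) ^ (-r))).update 0 (Sm 0)
    have hfun : Function.update
        (fun m => c * (1 - ξ) ^ r * (1 - ξ * (1 - p)) ^ (-r) * (nbCoef r m * ξp ^ m))
        0 (Sm 0) = Sm := by
      funext m
      rcases Nat.eq_zero_or_pos m with hm | hm
      · subst hm; rw [Function.update_self]
      · rw [Function.update_of_ne (by omega), hSmdef]
        simp only [if_neg (by omega : ¬ m = 0)]
        have e1 : (1 - ξ * (1 - p)) ^ (-(r + (m:ℝ))) =
            (1 - ξ * (1 - p)) ^ (-r) * ((1 - ξ * (1 - p)) ^ m)⁻¹ := by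
          rw [show -(r + (m:ℝ)) = -r + -(m:ℝ) by ring, Real.rpow_add h1q,
            Real.rpow_neg h1q.le (m:ℝ), Real.rpow_natCast]
        have e2 : ξp ^ m = (p * ξ) ^ m * ((1 - ξ * (1 - p)) ^ m)⁻¹ := by
          rw [hξpdef, div_pow, div_eq_mul_inv]
        rw [e1, e2]
        ring
    rw [hfun] at h
    simp only [nbCoef_zero hr, pow_zero, mul_one] at h
    have hd : (1 - ξp) ^ (-r) = (1 - ξ) ^ (-r) / (1 - ξ * (1 - p)) ^ (-r) := by
      rw [h1ξp, Real.div_rpow h1ξ.le h1q.le]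
    have hne1 : (1 - ξ * (1 - p)) ^ (-r) ≠ 0 := (Real.rpow_pos_of_pos h1q _).ne'
    have hinv : (1 - ξ) ^ (-r) = ((1 - ξ) ^ r)⁻¹ := Real.rpow_neg h1ξ.le r
    have hval : Sm 0 - c * (1 - ξ) ^ r * (1 - ξ * (1 - p)) ^ (-r) +
        c * (1 - ξ) ^ r * (1 - ξ * (1 - p)) ^ (-r) * (1 - ξp) ^ (-r) = 1 := by
      rw [hSmdef]
      simp only [eq_self_iff_true, if_true]
      rw [hd, hinv, hcdef]
      field_simp
      ring
    rwa [hval] at h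
  have htotal1 : ∑' m, ENNReal.ofReal (Sm m) = 1 := by
    rw [← ENNReal.ofReal_tsum_of_nonneg hSmnn hout.summable, hout.tsum_eq,
      ENNReal.ofReal_one]
  have htotal : ∑' mk : ℕ × ℕ, ENNReal.ofReal (g mk.1 mk.2) = 1 := by
    rw [ENNReal.tsum_prod (f := fun m k' => ENNReal.ofReal (g m k'))]
    simp_rw [hinner]
    exact htotal1
  -- event measures and null-measurability
  have hkey1 : ∀ s : Fin S,
      μ {ω | Np s ω = l ∧ N s ω - Np s ω = k} = ENNReal.ofReal (g l k) ∧
      NullMeasurableSet {ω | Np s ω = l ∧ N s ω - Np s ω = k} μ := by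
    intro s
    have hsplit := ENNReal.tsum_eq_add_tsum_ite
      (f := fun mk : ℕ × ℕ => ENNReal.ofReal (g mk.1 mk.2)) (l, k)
    rw [htotal] at hsplit
    have hble : ENNReal.ofReal (g l k) ≤ 1 := by rw [hsplit]; exact le_self_add
    have hcompl : μ {ω | Np s ω = l ∧ N s ω - Np s ω = k}ᶜ ≤
        1 - ENNReal.ofReal (g l k) := by
      have hsub : {ω | Np s ω = l ∧ N s ω - Np s ω = k}ᶜ ⊆
          ⋃ mk : ℕ × ℕ, (if mk = (l, k) then (∅ : Set Ω) else
            {ω | Np s ω = mk.1 ∧ N s ω - Np s ω = mk.2}) := by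
        intro ω hω
        refine Set.mem_iUnion.2 ⟨(Np s ω, N s ω - Np s ω), ?_⟩
        rw [if_neg ?_]
        · exact ⟨rfl, rfl⟩
        · intro hmk
          exact hω ⟨congrArg Prod.fst hmk, congrArg Prod.snd hmk⟩
      refine (measure_mono hsub).trans ((measure_iUnion_le _).trans (le_of_eq ?_))
      have hmeq : ∀ mk : ℕ × ℕ, μ (if mk = (l, k) then (∅ : Set Ω) else
          {ω | Np s ω = mk.1 ∧ N s ω - Np s ω = mk.2}) =
          (@ite _ (mk = (l, k)) (Classical.propDecidable _) 0
            (ENNReal.ofReal (g mk.1 mk.2))) := by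
        intro mk
        split_ifs
        · simp
        · exact hA s mk.1 mk.2
      rw [tsum_congr hmeq]
      refine ENNReal.eq_sub_of_add_eq ENNReal.ofReal_ne_top ?_
      rw [add_comm]
      exact hsplit.symm
    exact measure_eq_and_nullMeasurable hble (le_of_eq (hA s l k)) hcompl
  have hkey2 : ∀ s : Fin S,
      μ {ω | Np s ω = l} = ENNReal.ofReal (Sm l) ∧
      NullMeasurableSet {ω | Np s ω = l} μ := by
    intro s
    have hsplit := ENNReal.tsum_eq_add_tsum_ite (f := fun m => ENNReal.ofReal (Sm m)) l
    rw [htotal1] at hsplit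
    have hble : ENNReal.ofReal (Sm l) ≤ 1 := by rw [hsplit]; exact le_self_add
    have h1 : μ {ω | Np s ω = l} ≤ ENNReal.ofReal (Sm l) := by
      have hsub : {ω | Np s ω = l} ⊆
          ⋃ k' : ℕ, {ω | Np s ω = l ∧ N s ω - Np s ω = k'} :=
        fun ω hω => Set.mem_iUnion.2 ⟨N s ω - Np s ω, hω, rfl⟩
      refine (measure_mono hsub).trans ((measure_iUnion_le _).trans (le_of_eq ?_))
      rw [← hinner l]
      exact tsum_congr fun k' => hA s l k'
    have hcompl : μ {ω | Np s ω = l}ᶜ ≤ 1 - ENNReal.ofReal (Sm l) := by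
      have hsub : {ω | Np s ω = l}ᶜ ⊆
          ⋃ mk : ℕ × ℕ, (if mk.1 = l then (∅ : Set Ω) else
            {ω | Np s ω = mk.1 ∧ N s ω - Np s ω = mk.2}) := by
        intro ω hω
        refine Set.mem_iUnion.2 ⟨(Np s ω, N s ω - Np s ω), ?_⟩
        rw [if_neg (by simpa using hω)]
        exact ⟨rfl, rfl⟩
      refine (measure_mono hsub).trans ((measure_iUnion_le _).trans ?_)
      have hmeq : ∀ mk : ℕ × ℕ, μ (if mk.1 = l then (∅ : Set Ω) else
          {ω | Np s ω = mk.1 ∧ N s ω - Np s ω = mk.2}) =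
          (if mk.1 = l then 0 else ENNReal.ofReal (g mk.1 mk.2)) := by
        intro mk
        split_ifs
        · simp
        · exact hA s mk.1 mk.2
      rw [tsum_congr hmeq, ENNReal.tsum_prod (f := fun m k' =>
        if m = l then 0 else ENNReal.ofReal (g m k'))]
      have hrow : ∀ m : ℕ, ∑' k' : ℕ, (if m = l then 0 else ENNReal.ofReal (g m k')) =
          (@ite _ (m = l) (Classical.propDecidable _) 0 (ENNReal.ofReal (Sm m))) := by
        intro m
        split_ifs
        · simp
        · exact hinner m
      rw [tsum_congr hrow]
      refine le_of_eq (ENNReal.eq_sub_of_add_eq ENNReal.ofReal_ne_top ?_)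
      rw [add_comm]
      exact hsplit.symm
    exact measure_eq_and_nullMeasurable hble h1 hcompl
  -- the two integrals
  have hLHS : ∫ ω, ((Finset.univ.filter
      fun s : Fin S => Np s ω = l ∧ N s ω - Np s ω = k).card : ℝ) ∂μ = S * g l k := by
    have hre : ∀ ω : Ω, ((Finset.univ.filter
        fun s : Fin S => Np s ω = l ∧ N s ω - Np s ω = k).card : ℝ)
        = ∑ s : Fin S, ({ω' | Np s ω' = l ∧ N s ω' - Np s ω' = k}).indicator
            (fun _ => (1:ℝ)) ω := by
      intro ω
      rw [Finset.card_filter]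
      push_cast
      refine Finset.sum_congr rfl fun s _ => ?_
      by_cases h : Np s ω = l ∧ N s ω - Np s ω = k
      · simp [Set.indicator_apply, Set.mem_setOf_eq, h]
      · simp [Set.indicator_apply, Set.mem_setOf_eq, h]
    rw [integral_congr_ae (Filter.Eventually.of_forall hre),
      integral_finset_sum _ fun s _ => (indicator_integral_nm (hkey1 s).2).1]
    have hval : ∀ s : Fin S, ∫ ω, ({ω' | Np s ω' = l ∧ N s ω' - Np s ω' = k}).indicator
        (fun _ => (1:ℝ)) ω ∂μ = g l k := by
      intro s
      rw [(indicator_integral_nm (hkey1 s).2).2, (hkey1 s).1,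
        ENNReal.toReal_ofReal (hgnn l k)]
    rw [Finset.sum_congr rfl fun s _ => hval s, Finset.sum_const, Finset.card_univ,
      Fintype.card_fin, nsmul_eq_mul]
  have hRHS : ∫ ω, ((Finset.univ.filter
      fun s : Fin S => Np s ω = l).card : ℝ) ∂μ = S * Sm l := by
    have hre : ∀ ω : Ω, ((Finset.univ.filter fun s : Fin S => Np s ω = l).card : ℝ)
        = ∑ s : Fin S, ({ω' | Np s ω' = l}).indicator (fun _ => (1:ℝ)) ω := by
      intro ω
      rw [Finset.card_filter]
      push_cast
      refine Finset.sum_congr rfl fun s _ => ?_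
      by_cases h : Np s ω = l
      · simp [Set.indicator_apply, Set.mem_setOf_eq, h]
      · simp [Set.indicator_apply, Set.mem_setOf_eq, h]
    rw [integral_congr_ae (Filter.Eventually.of_forall hre),
      integral_finset_sum _ fun s _ => (indicator_integral_nm (hkey2 s).2).1]
    have hval : ∀ s : Fin S, ∫ ω, ({ω' | Np s ω' = l}).indicator
        (fun _ => (1:ℝ)) ω ∂μ = Sm l := by
      intro s
      rw [(indicator_integral_nm (hkey2 s).2).2, (hkey2 s).1,
        ENNReal.toReal_ofReal (hSmnn l)]
    rw [Finset.sum_congr rfl fun s _ => hval s, Finset.sum_const, Finset.card_univ,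
      Fintype.card_fin, nsmul_eq_mul]
  rw [hLHS, hRHS]
  -- final algebra
  have hgval : g l k = c * (1 - ξ) ^ r * (((k + l).choose l : ℝ) * p ^ l * (1 - p) ^ k *
      nbCoef r (k + l) * ξ ^ (k + l)) := by
    simp only [hgdef]
    rw [if_pos (by omega : 1 ≤ l + k), show l + k = k + l from Nat.add_comm l k]
    ring
  have hSl : Sm l = c * (1 - ξ) ^ r *
      (nbCoef r l * ξp ^ l * (1 - ξp) ^ r * (1 - ξ) ^ (-r)) := by
    rw [hSmdef]
    simp only [if_neg (by omega : ¬ l = 0)]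
    have e1 : (1 - ξ * (1 - p)) ^ (-(r + (l:ℝ))) =
        (1 - ξ * (1 - p)) ^ (-r) * ((1 - ξ * (1 - p)) ^ l)⁻¹ := by
      rw [show -(r + (l:ℝ)) = -r + -(l:ℝ) by ring, Real.rpow_add h1q,
        Real.rpow_neg h1q.le (l:ℝ), Real.rpow_natCast]
    have e2 : ξp ^ l = (p * ξ) ^ l * ((1 - ξ * (1 - p)) ^ l)⁻¹ := by
      rw [hξpdef, div_pow, div_eq_mul_inv]
    have e3 : (1 - ξp) ^ r = (1 - ξ) ^ r / (1 - ξ * (1 - p)) ^ r := by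
      rw [h1ξp, Real.div_rpow h1ξ.le h1q.le]
    have e4 : (1 - ξ) ^ (-r) = ((1 - ξ) ^ r)⁻¹ := Real.rpow_neg h1ξ.le r
    have e5 : (1 - ξ * (1 - p)) ^ (-r) = ((1 - ξ * (1 - p)) ^ r)⁻¹ :=
      Real.rpow_neg h1q.le r
    rw [e1, e2, e3, e4, e5]
    have h2 : ((1 - ξ * (1 - p)) ^ r) ≠ 0 := (Real.rpow_pos_of_pos h1q r).ne'
    have h3 : ((1 - ξ * (1 - p)) ^ l) ≠ 0 := by positivity
    have h4 : ((1 - ξ) ^ r) ≠ 0 := hrpow0.ne'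
    field_simp
  have hDpos : (0:ℝ) < nbCoef r l * ξp ^ l * (1 - ξp) ^ r * (1 - ξ) ^ (-r) := by
    have h1 : (0:ℝ) < 1 - ξp := by rw [h1ξp]; positivity
    have h2 := nbCoef_pos hr l
    have h3 := Real.rpow_pos_of_pos h1 r
    have h4 := Real.rpow_pos_of_pos h1ξ (-r)
    positivity
  rw [hgval, hSl]
  have hn1 := (nbCoef_pos hr l).ne'
  have hn2 : (1 - ξp) ^ r ≠ 0 := (Real.rpow_pos_of_pos (by rw [h1ξp]; positivity) r).ne'
  field_simp
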